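/- Let F be a free group and R a normal subgroup of F such that the quotient group F/R is finite, and let k ≥ 1. Then the quotient group (R ∩ Γ_{k+1}(F))/Γ_{k+1}(R, F) is finite. -/

import Mathlib

/-- The relative series `Γ_{k+1}(R, F)`: `Γ₁(R, F) = R` and
`Γ_{k+1}(R, F) = [Γ_k(R, F), Γ_k(F)]`, so `relDerivedSeries R k = Γ_{k+1}(R, F)`. -/
def relDerivedSeries {F : Type*} [Group F] (R : Subgroup F) : ℕ → Subgroup F
  | 0 => R
  | k + 1 => ⁅relDerivedSeries R k, derivedSeries F k⁆

section aux

open scoped commutatorElement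

variable {G : Type*} [Group G]

theorem relDerivedSeries_normal (R : Subgroup G) [hR : R.Normal] (k : ℕ) :
    (relDerivedSeries R k).Normal := by
  induction k with
  | zero => exact hR
  | succ k ih =>
    haveI := ih
    haveI := derivedSeries_normal G k
    exact Subgroup.commutator_normal _ _

theorem relDerivedSeries_le_self (R : Subgroup G) [R.Normal] (k : ℕ) :
    relDerivedSeries R k ≤ R := by
  induction k with
  | zero => exact le_rfl
  | succ k ih =>
    haveI := relDerivedSeries_normal R k
    exact (Subgroup.commutator_le_left _ _).trans ih

theorem relDerivedSeries_le_derivedSeries (R : Subgroup G) (k : ℕ) :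
    relDerivedSeries R k ≤ derivedSeries G k := by
  induction k with
  | zero => exact le_top
  | succ k ih => exact Subgroup.commutator_mono ih le_rfl

theorem relDerivedSeries_map_le {G' : Type*} [Group G'] (R : Subgroup G) {f : G →* G'}
    (hf : Function.Surjective f) (k : ℕ) :
    relDerivedSeries (R.map f) k ≤ (relDerivedSeries R k).map f := by
  induction k with
  | zero => exact le_rfl
  | succ k ih =>
    calc ⁅relDerivedSeries (R.map f) k, derivedSeries G' k⁆
        ≤ ⁅(relDerivedSeries R k).map f, (derivedSeries G k).map f⁆ :=
          Subgroup.commutator_mono ih (derivedSeries_le_map_derivedSeries hf k)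
      _ = (⁅relDerivedSeries R k, derivedSeries G k⁆).map f :=
          (Subgroup.map_commutator _ _ f).symm

/-- If the center has finite index, the set of commutators is finite. -/
theorem finite_commutatorSet_of_finite_quotient_center
    (h : Finite (G ⧸ Subgroup.center G)) : Finite (commutatorSet G) := by
  have left : ∀ (x y z : G), z ∈ Subgroup.center G → ⁅x * z, y⁆ = ⁅x, y⁆ := by
    intro x y z hz
    have hc : z * y = y * z := (Subgroup.mem_center_iff.mp hz y).symm
    calc ⁅x * z, y⁆ = x * (z * y * z⁻¹) * x⁻¹ * y⁻¹ := by
          rw [commutatorElement_def]; group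
      _ = ⁅x, y⁆ := by rw [hc, commutatorElement_def]; group
  have right : ∀ (x y z : G), z ∈ Subgroup.center G → ⁅x, y * z⁆ = ⁅x, y⁆ := by
    intro x y z hz
    have hc : z * x⁻¹ = x⁻¹ * z := (Subgroup.mem_center_iff.mp hz x⁻¹).symm
    calc ⁅x, y * z⁆ = x * y * (z * x⁻¹ * z⁻¹) * y⁻¹ := by
          rw [commutatorElement_def]; group
      _ = ⁅x, y⁆ := by rw [hc, commutatorElement_def]; group
  have key : ∀ a b : G, ⁅a, b⁆ =
      ⁅((a : G ⧸ Subgroup.center G)).out, ((b : G ⧸ Subgroup.center G)).out⁆ := by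
    intro a b
    have ha : a⁻¹ * ((a : G ⧸ Subgroup.center G)).out ∈ Subgroup.center G := by
      rw [← QuotientGroup.eq]
      exact (QuotientGroup.out_eq' _).symm
    have hb : b⁻¹ * ((b : G ⧸ Subgroup.center G)).out ∈ Subgroup.center G := by
      rw [← QuotientGroup.eq]
      exact (QuotientGroup.out_eq' _).symm
    have ea : ((a : G ⧸ Subgroup.center G)).out
        = a * (a⁻¹ * ((a : G ⧸ Subgroup.center G)).out) := by group
    have eb : ((b : G ⧸ Subgroup.center G)).out
        = b * (b⁻¹ * ((b : G ⧸ Subgroup.center G)).out) := by group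
    rw [ea, eb, left _ _ _ ha, right _ _ _ hb]
  have hsub : commutatorSet G ⊆
      (fun p : (G ⧸ Subgroup.center G) × (G ⧸ Subgroup.center G) =>
        ⁅p.1.out, p.2.out⁆) '' Set.univ := by
    rintro x ⟨a, b, rfl⟩
    exact ⟨((a : G ⧸ Subgroup.center G), (b : G ⧸ Subgroup.center G)), Set.mem_univ _,
      (key a b).symm⟩
  exact (Set.Finite.image _ Set.finite_univ).subset hsub

/-- Schur's theorem: if the center has finite index, the commutator subgroup is finite. -/
theorem finite_commutator_of_finite_quotient_center
    (h : Finite (G ⧸ Subgroup.center G)) : Finite (commutator G) := by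
  haveI := finite_commutatorSet_of_finite_quotient_center h
  infer_instance

/-- Key lemma: if `Γ_{k+1}(R, G)` is trivial and `G ⧸ R` is finite, then
`Γ_{k+1}(G) = derivedSeries G k` is finite. -/
theorem finite_derivedSeries_of_relDerivedSeries_eq_bot :
    ∀ (k : ℕ) {G : Type*} [Group G] (R : Subgroup G) [R.Normal],
      Finite (G ⧸ R) → relDerivedSeries R k = ⊥ → Finite (derivedSeries G k) := by
  intro k
  induction k with
  | zero =>
    intro G _ R _ hfin hbot
    have : R = ⊥ := hbot
    subst this
    haveI : Finite G := Finite.of_equiv _ (QuotientGroup.quotientBot (G := G)).toEquiv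
    infer_instance
  | succ k ih =>
    intro G _ R _ hfin hbot
    set N := relDerivedSeries R k with hN
    haveI : N.Normal := relDerivedSeries_normal R k
    set π := QuotientGroup.mk' N with hπ
    have hπs : Function.Surjective π := QuotientGroup.mk'_surjective N
    haveI : (R.map π).Normal := Subgroup.Normal.map inferInstance π hπs
    -- the quotient (G/N)/(R/N) is finite
    haveI hfin' : Finite ((G ⧸ N) ⧸ R.map π) :=
      Finite.of_equiv _ (QuotientGroup.quotientQuotientEquivQuotient N R
        (relDerivedSeries_le_self R k)).symm.toEquiv
    -- the relative series of R/N in G/N vanishes at stage k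
    have hbot' : relDerivedSeries (R.map π) k = ⊥ := by
      rw [eq_bot_iff]
      refine (relDerivedSeries_map_le R hπs k).trans (le_of_eq ?_)
      exact (Subgroup.map_eq_bot_iff N).mpr (le_of_eq (QuotientGroup.ker_mk' N).symm)
    haveI hDQ : Finite (derivedSeries (G ⧸ N) k) := ih (R.map π) hfin' hbot'
    -- now work in K = derivedSeries G k
    set K := derivedSeries G k with hK
    let f : K →* G ⧸ N := π.comp K.subtype
    -- kernel of f is central in K
    have hker : f.ker ≤ Subgroup.center K := by
      intro x hx
      have hxN : (x : G) ∈ N := by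
        have : π (x : G) = 1 := hx
        rwa [← QuotientGroup.ker_mk' N, MonoidHom.mem_ker]
      rw [Subgroup.mem_center_iff]
      intro y
      have : ⁅(x : G), (y : G)⁆ ∈ (⊥ : Subgroup G) := by
        rw [← hbot]
        exact Subgroup.commutator_mem_commutator hxN y.2
      rw [Subgroup.mem_bot, commutatorElement_eq_one_iff_mul_comm] at this
      exact Subtype.ext (by simpa using this.symm)
    -- range of f is finite
    have hrange : f.range ≤ derivedSeries (G ⧸ N) k := by
      rintro _ ⟨y, rfl⟩
      exact map_derivedSeries_le_derivedSeries π k ⟨(y : G), y.2, rfl⟩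
    haveI : Finite f.range :=
      Finite.of_injective _ (Subgroup.inclusion_injective hrange)
    haveI : Finite (K ⧸ f.ker) :=
      Finite.of_equiv _ (QuotientGroup.quotientKerEquivRange f).symm.toEquiv
    haveI hcen : Finite (K ⧸ Subgroup.center K) := by
      refine Finite.of_surjective
        (QuotientGroup.map f.ker (Subgroup.center K) (MonoidHom.id K) hker) ?_
      intro z
      obtain ⟨y, rfl⟩ := QuotientGroup.mk_surjective z
      exact ⟨QuotientGroup.mk y, rfl⟩
    haveI : Finite (commutator K) := finite_commutator_of_finite_quotient_center hcen
    -- transfer finiteness along the subtype map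
    have heq : derivedSeries G (k + 1) = (commutator K).map K.subtype := by
      rw [commutator_def, Subgroup.map_commutator]
      have htop : (⊤ : Subgroup K).map K.subtype = K := by
        rw [← MonoidHom.range_eq_map, Subgroup.range_subtype]
      rw [htop]
      rfl
    rw [heq]
    have : ((commutator K).map K.subtype : Set G) = K.subtype '' (commutator K) :=
      Subgroup.coe_map _ _
    have hfs : ((commutator K).map K.subtype : Set G).Finite := by
      rw [this]
      exact Set.Finite.image _ (Set.toFinite _)
    exact hfs

end aux

/-- Let `F` be a free group and `R` a normal subgroup of `F` with `F ⧸ R` finite, and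
`k ≥ 1`. Then the Baer invariant `(R ∩ Γ_{k+1}(F)) / Γ_{k+1}(R, F)` of `F ⧸ R` is
finite. -/
theorem finite_derived_baer_invariant_of_finite_quotient
    {F : Type*} [Group F] [IsFreeGroup F] (R : Subgroup F) [R.Normal]
    (hfin : Finite (F ⧸ R)) (k : ℕ) (hk : 1 ≤ k) :
    Finite ((R ⊓ derivedSeries F k : Subgroup F) ⧸
      (relDerivedSeries R k).subgroupOf (R ⊓ derivedSeries F k)) := by
  set N := relDerivedSeries R k with hN
  haveI : N.Normal := relDerivedSeries_normal R k
  set π := QuotientGroup.mk' N with hπ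
  have hπs : Function.Surjective π := QuotientGroup.mk'_surjective N
  haveI : (R.map π).Normal := Subgroup.Normal.map inferInstance π hπs
  haveI hfin' : Finite ((F ⧸ N) ⧸ R.map π) :=
    Finite.of_equiv _ (QuotientGroup.quotientQuotientEquivQuotient N R
      (relDerivedSeries_le_self R k)).symm.toEquiv
  have hbot' : relDerivedSeries (R.map π) k = ⊥ := by
    rw [eq_bot_iff]
    refine (relDerivedSeries_map_le R hπs k).trans (le_of_eq ?_)
    exact (Subgroup.map_eq_bot_iff N).mpr (le_of_eq (QuotientGroup.ker_mk' N).symm)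
  haveI hDQ : Finite (derivedSeries (F ⧸ N) k) :=
    finite_derivedSeries_of_relDerivedSeries_eq_bot k (R.map π) hfin' hbot'
  set K := (R ⊓ derivedSeries F k : Subgroup F) with hKdef
  let f : K →* F ⧸ N := π.comp K.subtype
  have hker : N.subgroupOf K = f.ker := by
    ext x
    constructor
    · intro hx
      show π (x : F) = 1
      rw [← MonoidHom.mem_ker, QuotientGroup.ker_mk']
      exact hx
    · intro hx
      have : π (x : F) = 1 := hx
      rw [← MonoidHom.mem_ker, QuotientGroup.ker_mk'] at this
      exact this
  rw [hN, hker]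
  have hrange : f.range ≤ derivedSeries (F ⧸ N) k := by
    rintro _ ⟨y, rfl⟩
    exact map_derivedSeries_le_derivedSeries π k ⟨(y : F), y.2.2, rfl⟩
  haveI : Finite f.range :=
    Finite.of_injective _ (Subgroup.inclusion_injective hrange)
  exact Finite.of_equiv _ (QuotientGroup.quotientKerEquivRange f).symm.toEquiv
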